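/- The additive group ℤ_p of p-adic integers admits, for every integer k ≥ 1, a simple virtual endomorphism of index p^k, namely φ: p^kℤ_p → ℤ_p given by φ(a) = p^{-k}a: the only subgroup N of ℤ_p with N ⊆ p^kℤ_p and φ(N) ⊆ N is the trivial subgroup. -/

import Mathlib

open PadicInt

theorem stmt1 (p : ℕ) [Fact p.Prime] (k : ℕ) (hk : 1 ≤ k) :
    ∃ φ : (AddMonoidHom.mulLeft ((p : ℤ_[p]) ^ k)).range →+ ℤ_[p],
      (∀ a : ℤ_[p], φ ⟨(p : ℤ_[p]) ^ k * a, ⟨a, rfl⟩⟩ = a) ∧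
      (AddMonoidHom.mulLeft ((p : ℤ_[p]) ^ k)).range.index = p ^ k ∧
      ∀ N : AddSubgroup ℤ_[p],
        ∀ hN : N ≤ (AddMonoidHom.mulLeft ((p : ℤ_[p]) ^ k)).range,
          (∀ x (hx : x ∈ N), φ ⟨x, hN hx⟩ ∈ N) → N = ⊥ := by
  have hp : ((p : ℤ_[p]) ^ k) ≠ 0 := by
    apply pow_ne_zero
    exact_mod_cast (Nat.cast_ne_zero (R := ℤ_[p])).mpr (Fact.out : p.Prime).ne_zero
  -- the inverse map
  have key : ∀ z : (AddMonoidHom.mulLeft ((p : ℤ_[p]) ^ k)).range,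
      (p : ℤ_[p]) ^ k * z.2.choose = (z : ℤ_[p]) := fun z => z.2.choose_spec
  refine ⟨{ toFun := fun z => z.2.choose
            map_zero' := ?_
            map_add' := ?_ }, ?_, ?_, ?_⟩
  · apply mul_left_cancel₀ hp
    rw [key, mul_zero]; rfl
  · intro a b
    apply mul_left_cancel₀ hp
    rw [key, mul_add, key, key]; rfl
  · intro a
    apply mul_left_cancel₀ hp
    exact key ⟨_, a, rfl⟩
  · -- index
    have hker : ((toZModPow k).toAddMonoidHom : ℤ_[p] →+ ZMod (p ^ k)).ker
        = (AddMonoidHom.mulLeft ((p : ℤ_[p]) ^ k)).range := by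
      ext x
      simp only [AddMonoidHom.mem_ker, RingHom.toAddMonoidHom_eq_coe,
        AddMonoidHom.coe_coe, AddMonoidHom.mem_range, AddMonoidHom.mulLeft]
      simp only [AddMonoidHom.coe_mk, ZeroHom.coe_mk]
      rw [show (toZModPow k x = 0) ↔ x ∈ RingHom.ker (toZModPow (p := p) k) from Iff.rfl,
        ker_toZModPow, Ideal.mem_span_singleton]
      exact ⟨fun ⟨c, hc⟩ => ⟨c, hc.symm⟩, fun ⟨c, hc⟩ => ⟨c, hc.symm⟩⟩
    have hsurj : Function.Surjective (toZModPow (p := p) k) := fun z =>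
      ⟨(z.val : ℤ_[p]), by rw [map_natCast, ZMod.natCast_zmod_val]⟩
    have := (QuotientAddGroup.quotientKerEquivOfSurjective
      ((toZModPow k).toAddMonoidHom : ℤ_[p] →+ ZMod (p ^ k)) hsurj).toEquiv
    rw [hker] at this
    rw [AddSubgroup.index, Nat.card_congr this, Nat.card_eq_fintype_card, ZMod.card]
  · intro N hN hinv
    rw [AddSubgroup.eq_bot_iff_forall]
    intro x hxN
    by_contra hx0
    -- claim: all nonzero elements of N have valuation ≥ n for all n
    have claim : ∀ n : ℕ, ∀ y : ℤ_[p], y ∈ N → y ≠ 0 → (n : ℤ) ≤ y.valuation := by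
      intro n
      induction n with
      | zero => intro y _ _; exact_mod_cast Nat.zero_le y.valuation
      | succ n ih =>
        intro y hy hy0
        set z := (Exists.choose (hN hy) : ℤ_[p]) with hz
        have hzy : (p : ℤ_[p]) ^ k * z = y := (hN hy).choose_spec
        have hzN : z ∈ N := hinv y hy
        have hz0 : z ≠ 0 := fun h => hy0 (by rw [← hzy, h, mul_zero])
        have := ih z hzN hz0
        rw [← hzy, valuation_p_pow_mul _ _ hz0]
        push_cast
        omega
    obtain ⟨n, hn⟩ : ∃ n : ℕ, x.valuation < (n : ℤ) :=
      ⟨x.valuation + 1, by omega⟩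
    exact absurd (claim n x hxN hx0) (not_le.mpr hn)
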